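/- For the quantum solid torus P = O(D_p ×_θ S¹) with H = ℂ[u,u⁻¹]-coaction ρ(x) = x⊗1, ρ(h) = h⊗u, the map γ : H → P, uⁿ ↦ hⁿ, is a cleaving map: it is right H-colinear and convolution invertible with inverse uⁿ ↦ h⁻ⁿ, and the canonical map can : P ⊗_B P → P ⊗ H, p ⊗_B p' ↦ p p'₍₀₎ ⊗ p'₍₁₎, where B = P^{co H} ≅ O(D_p), is bijective. -/

import Mathlib

open scoped TensorProduct

/-- Defining relations of the quantum solid torus `O(D_p ×_θ S¹)`.
Generators: `0 = x`, `1 = x*`, `2 = h`, `3 = h⁻¹ = h*`. -/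
inductive SolidTorusRel (p θ : ℝ) : FreeAlgebra ℂ (Fin 4) → FreeAlgebra ℂ (Fin 4) → Prop
  | h_hs : SolidTorusRel p θ (FreeAlgebra.ι ℂ 2 * FreeAlgebra.ι ℂ 3) 1
  | hs_h : SolidTorusRel p θ (FreeAlgebra.ι ℂ 3 * FreeAlgebra.ι ℂ 2) 1
  | disc : SolidTorusRel p θ (FreeAlgebra.ι ℂ 1 * FreeAlgebra.ι ℂ 0)
      ((p : ℂ) • (FreeAlgebra.ι ℂ 0 * FreeAlgebra.ι ℂ 1) +
        algebraMap ℂ (FreeAlgebra ℂ (Fin 4)) (1 - (p : ℝ)))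
  | h_x : SolidTorusRel p θ (FreeAlgebra.ι ℂ 2 * FreeAlgebra.ι ℂ 0)
      (Complex.exp (θ * Complex.I) • (FreeAlgebra.ι ℂ 0 * FreeAlgebra.ι ℂ 2))
  | h_xs : SolidTorusRel p θ (FreeAlgebra.ι ℂ 2 * FreeAlgebra.ι ℂ 1)
      (Complex.exp (-(θ * Complex.I)) • (FreeAlgebra.ι ℂ 1 * FreeAlgebra.ι ℂ 2))

/-- The coordinate algebra of the quantum solid torus. -/
def SolidTorus (p θ : ℝ) := RingQuot (SolidTorusRel p θ)

noncomputable instance (p θ : ℝ) : Ring (SolidTorus p θ) :=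
  inferInstanceAs (Ring (RingQuot (SolidTorusRel p θ)))
noncomputable instance (p θ : ℝ) : Algebra ℂ (SolidTorus p θ) :=
  inferInstanceAs (Algebra ℂ (RingQuot (SolidTorusRel p θ)))

noncomputable def stX (p θ : ℝ) : SolidTorus p θ :=
  RingQuot.mkAlgHom ℂ (SolidTorusRel p θ) (FreeAlgebra.ι ℂ 0)
noncomputable def stXs (p θ : ℝ) : SolidTorus p θ :=
  RingQuot.mkAlgHom ℂ (SolidTorusRel p θ) (FreeAlgebra.ι ℂ 1)
noncomputable def stH (p θ : ℝ) : SolidTorus p θ :=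
  RingQuot.mkAlgHom ℂ (SolidTorusRel p θ) (FreeAlgebra.ι ℂ 2)
noncomputable def stHs (p θ : ℝ) : SolidTorus p θ :=
  RingQuot.mkAlgHom ℂ (SolidTorusRel p θ) (FreeAlgebra.ι ℂ 3)

/-- Integer powers `hⁿ` of the unitary `h` (negative powers via `h⁻¹ = h*`). -/
noncomputable def stHpow (p θ : ℝ) (n : ℤ) : SolidTorus p θ :=
  if 0 ≤ n then stH p θ ^ n.toNat else stHs p θ ^ (-n).toNat

set_option synthInstance.maxHeartbeats 1000000
set_option maxHeartbeats 2000000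

namespace SolidTorusAux

open LaurentPolynomial

variable {p θ : ℝ}

lemma st_h_mul_hs : stH p θ * stHs p θ = 1 := by
  have := RingQuot.mkAlgHom_rel ℂ (SolidTorusRel.h_hs (p := p) (θ := θ))
  simp only [map_mul, map_one] at this; exact this

lemma st_hs_mul_h : stHs p θ * stH p θ = 1 := by
  have := RingQuot.mkAlgHom_rel ℂ (SolidTorusRel.hs_h (p := p) (θ := θ))
  simp only [map_mul, map_one] at this; exact this

noncomputable def stHunit (p θ : ℝ) : (SolidTorus p θ)ˣ :=
  ⟨stH p θ, stHs p θ, st_h_mul_hs, st_hs_mul_h⟩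

lemma stHpow_eq (n : ℤ) : stHpow p θ n = ((stHunit p θ ^ n : (SolidTorus p θ)ˣ) : SolidTorus p θ) := by
  unfold stHpow
  split
  · rename_i hn
    rw [show n = (n.toNat : ℤ) by omega, zpow_natCast, Units.val_pow_eq_pow_val]
    rfl
  · rename_i hn
    rw [show n = -((-n).toNat : ℤ) by omega, zpow_neg, zpow_natCast, ← inv_pow,
      Units.val_pow_eq_pow_val, neg_neg, Int.toNat_natCast]
    rfl

lemma stHpow_add (m n : ℤ) : stHpow p θ (m + n) = stHpow p θ m * stHpow p θ n := by
  rw [stHpow_eq, stHpow_eq, stHpow_eq, zpow_add, Units.val_mul]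

lemma stHpow_zero : stHpow p θ 0 = 1 := by rw [stHpow_eq, zpow_zero, Units.val_one]

lemma stHpow_one : stHpow p θ 1 = stH p θ := by
  rw [stHpow_eq, zpow_one]; rfl

lemma stHpow_neg_one : stHpow p θ (-1) = stHs p θ := by
  rw [stHpow_eq, zpow_neg, zpow_one]; rfl

lemma stHpow_mul_neg (n : ℤ) : stHpow p θ n * stHpow p θ (-n) = 1 := by
  rw [← stHpow_add, add_neg_cancel, stHpow_zero]

lemma stHpow_neg_mul (n : ℤ) : stHpow p θ (-n) * stHpow p θ n = 1 := by
  rw [← stHpow_add, neg_add_cancel, stHpow_zero]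


section Rho

variable (ρ : SolidTorus p θ →ₐ[ℂ] SolidTorus p θ ⊗[ℂ] LaurentPolynomial ℂ)
variable (hh : ρ (stH p θ) = stH p θ ⊗ₜ[ℂ] LaurentPolynomial.T 1)
variable (hhs : ρ (stHs p θ) = stHs p θ ⊗ₜ[ℂ] LaurentPolynomial.T (-1))

include hh hhs in
lemma rho_stHpow (n : ℤ) : ρ (stHpow p θ n) = stHpow p θ n ⊗ₜ[ℂ] T n := by
  induction n using Int.induction_on with
  | zero =>
    simp [stHpow_zero, T_zero, Algebra.TensorProduct.one_def]
  | succ k ih =>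
    rw [show (k : ℤ) + 1 = k + 1 from rfl, stHpow_add, map_mul, ih, stHpow_one, hh,
      Algebra.TensorProduct.tmul_mul_tmul, ← T_add]
  | pred k ih =>
    rw [show -(k : ℤ) - 1 = -k + -1 from by ring, stHpow_add, map_mul, ih, stHpow_neg_one, hhs,
      Algebra.TensorProduct.tmul_mul_tmul, ← T_add]

/-- The canonical map `P ⊗ P → P ⊗ H`. -/
noncomputable def canMap : (SolidTorus p θ ⊗[ℂ] SolidTorus p θ) →ₗ[ℂ]
    (SolidTorus p θ ⊗[ℂ] LaurentPolynomial ℂ) :=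
  (LinearMap.rTensor (LaurentPolynomial ℂ)
      (LinearMap.mul' ℂ (SolidTorus p θ))).comp
    (((TensorProduct.assoc ℂ (SolidTorus p θ) (SolidTorus p θ)
        (LaurentPolynomial ℂ)).symm.toLinearMap).comp
      (LinearMap.lTensor (SolidTorus p θ) ρ.toLinearMap))

lemma canMap_tmul (a b : SolidTorus p θ) :
    canMap ρ (a ⊗ₜ[ℂ] b) =
      LinearMap.rTensor (LaurentPolynomial ℂ) (LinearMap.mulLeft ℂ a) (ρ b) := by
  have key : ∀ z : SolidTorus p θ ⊗[ℂ] LaurentPolynomial ℂ,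
      (LinearMap.rTensor (LaurentPolynomial ℂ) (LinearMap.mul' ℂ (SolidTorus p θ)))
        ((TensorProduct.assoc ℂ (SolidTorus p θ) (SolidTorus p θ)
          (LaurentPolynomial ℂ)).symm.toLinearMap (a ⊗ₜ[ℂ] z)) =
      LinearMap.rTensor (LaurentPolynomial ℂ) (LinearMap.mulLeft ℂ a) z := by
    intro z
    induction z using TensorProduct.induction_on with
    | zero => rw [TensorProduct.tmul_zero, map_zero, map_zero, map_zero]
    | tmul c d =>
      simp only [LinearEquiv.coe_toLinearMap, TensorProduct.assoc_symm_tmul,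
        LinearMap.rTensor_tmul, LinearMap.mul'_apply, LinearMap.mulLeft_apply]
    | add u v hu hv =>
      rw [TensorProduct.tmul_add, map_add, map_add, map_add, hu, hv]
  simp only [canMap, LinearMap.comp_apply, LinearMap.lTensor_tmul, AlgHom.toLinearMap_apply]
  exact key (ρ b)


variable (hx : ρ (stX p θ) = stX p θ ⊗ₜ[ℂ] 1)
variable (hxs : ρ (stXs p θ) = stXs p θ ⊗ₜ[ℂ] 1)

lemma adjoin_gens0 : Algebra.adjoin ℂ (Set.range fun i : Fin 4 =>
    RingQuot.mkAlgHom ℂ (SolidTorusRel p θ) (FreeAlgebra.ι ℂ i)) = ⊤ := by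
  rw [eq_top_iff]
  intro q _
  obtain ⟨a, rfl⟩ := RingQuot.mkAlgHom_surjective ℂ (SolidTorusRel p θ) q
  have h1 : a ∈ Algebra.adjoin ℂ (Set.range (FreeAlgebra.ι ℂ)) := by
    rw [FreeAlgebra.adjoin_range_ι]; trivial
  have h2 : RingQuot.mkAlgHom ℂ (SolidTorusRel p θ) a ∈
      (Algebra.adjoin ℂ (Set.range (FreeAlgebra.ι ℂ))).map
        (RingQuot.mkAlgHom ℂ (SolidTorusRel p θ)) := ⟨a, h1, rfl⟩
  rw [AlgHom.map_adjoin, ← Set.range_comp] at h2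
  exact h2

noncomputable def stGen (p θ : ℝ) (i : Fin 4) : SolidTorus p θ :=
  RingQuot.mkAlgHom ℂ (SolidTorusRel p θ) (FreeAlgebra.ι ℂ i)

lemma adjoin_gens : Algebra.adjoin ℂ (Set.range fun i : Fin 4 => stGen p θ i) = ⊤ :=
  adjoin_gens0

include hh hhs hx hxs in
lemma rho_decomp (q : SolidTorus p θ) :
    ∃ (s : Finset ℤ) (f : ℤ → SolidTorus p θ),
      (∀ n, ρ (f n) = f n ⊗ₜ[ℂ] T n) ∧ (∀ n ∉ s, f n = 0) ∧
      (∑ n ∈ s, f n ⊗ₜ[ℂ] T n) = ρ q ∧ (∑ n ∈ s, f n) = q := by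
  classical
  have hq : q ∈ Subalgebra.toSubmodule (Algebra.adjoin ℂ (Set.range fun i : Fin 4 =>
      stGen p θ i)) := by
    rw [adjoin_gens]
    exact Submodule.mem_top
  rw [Algebra.adjoin_eq_span] at hq
  induction hq using Submodule.span_induction with
  | mem w hw =>
    change w ∈ Submonoid.closure _ at hw
    induction hw using Submonoid.closure_induction_left with
    | one =>
      refine ⟨{0}, fun n => if n = 0 then 1 else 0, fun n => ?_, fun n hn => ?_, ?_, ?_⟩
      · by_cases h : n = 0 <;>
          simp [h, T_zero, Algebra.TensorProduct.one_def]
      · simp only [Finset.mem_singleton] at hn; simp [hn]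
      · simp [T_zero, Algebra.TensorProduct.one_def]
      · simp
    | mul_left g hg y hy ih =>
      obtain ⟨s, f, hco, hz, hρ, hsum⟩ := ih
      obtain ⟨i, rfl⟩ := hg
      have hge : ∃ e : ℤ, ρ (stGen p θ i) =
          stGen p θ i ⊗ₜ[ℂ] T e := by
        fin_cases i
        · exact ⟨0, by rw [T_zero]; exact hx⟩
        · exact ⟨0, by rw [T_zero]; exact hxs⟩
        · exact ⟨1, hh⟩
        · exact ⟨-1, hhs⟩
      obtain ⟨e, hge⟩ := hge
      set g : SolidTorus p θ := stGen p θ i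
        with hgdef
      refine ⟨s.map (addRightEmbedding e), fun n => g * f (n - e), fun n => ?_, fun n hn => ?_,
        ?_, ?_⟩
      · rw [map_mul, hge, hco (n - e), Algebra.TensorProduct.tmul_mul_tmul, ← T_add]
        congr 2
        omega
      · have : n - e ∉ s := by
          intro hmem
          exact hn (Finset.mem_map.mpr ⟨n - e, hmem, by simp [addRightEmbedding_apply]⟩)
        show g * f (n - e) = 0
        rw [hz _ this, mul_zero]
      · rw [Finset.sum_map, map_mul, hge, ← hρ, Finset.mul_sum]
        refine Finset.sum_congr rfl fun n hn => ?_
        simp only [addRightEmbedding_apply, add_sub_cancel_right]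
        rw [Algebra.TensorProduct.tmul_mul_tmul, ← T_add, add_comm]
      · show (∑ n ∈ Finset.map (addRightEmbedding e) s, g * f (n - e)) = g * y
        rw [Finset.sum_map]
        simp only [addRightEmbedding_apply, add_sub_cancel_right]
        rw [← Finset.mul_sum, hsum]
  | zero =>
    exact ⟨∅, 0, fun n => by simp, fun n _ => rfl, by simp, by simp⟩
  | add x y hxmem hymem ihx ihy =>
    obtain ⟨s₁, f₁, c₁, z₁, r₁, m₁⟩ := ihx
    obtain ⟨s₂, f₂, c₂, z₂, r₂, m₂⟩ := ihy
    refine ⟨s₁ ∪ s₂, f₁ + f₂, fun n => ?_, fun n hn => ?_, ?_, ?_⟩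
    · simp only [Pi.add_apply, map_add, c₁ n, c₂ n, TensorProduct.add_tmul]
    · simp only [Finset.mem_union, not_or] at hn
      simp [Pi.add_apply, z₁ n hn.1, z₂ n hn.2]
    · simp only [Pi.add_apply, TensorProduct.add_tmul, Finset.sum_add_distrib]
      rw [← Finset.sum_subset Finset.subset_union_left
            (fun n _ hn => by rw [z₁ n hn, TensorProduct.zero_tmul]),
          ← Finset.sum_subset Finset.subset_union_right
            (fun n _ hn => by rw [z₂ n hn, TensorProduct.zero_tmul]),
          r₁, r₂, map_add]
    · simp only [Pi.add_apply, Finset.sum_add_distrib]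
      rw [← Finset.sum_subset Finset.subset_union_left (fun n _ hn => z₁ n hn),
          ← Finset.sum_subset Finset.subset_union_right (fun n _ hn => z₂ n hn), m₁, m₂]
  | smul a x hxmem ihx =>
    obtain ⟨s, f, c, z, r, m⟩ := ihx
    refine ⟨s, a • f, fun n => ?_, fun n hn => ?_, ?_, ?_⟩
    · simp only [Pi.smul_apply, map_smul, c n, TensorProduct.smul_tmul']
    · simp [Pi.smul_apply, z n hn]
    · simp only [Pi.smul_apply, map_smul, ← r, Finset.smul_sum]
      exact Finset.sum_congr rfl fun n _ => (TensorProduct.smul_tmul' a (f n) (T n)).symm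
    · simp only [Pi.smul_apply, ← Finset.smul_sum, m]

/-- The balancing relations submodule. -/
noncomputable def relSub : Submodule ℂ (SolidTorus p θ ⊗[ℂ] SolidTorus p θ) :=
  Submodule.span ℂ
    {t : SolidTorus p θ ⊗[ℂ] SolidTorus p θ |
      ∃ p₁ p₂ b : SolidTorus p θ, ρ b = b ⊗ₜ[ℂ] 1 ∧
        t = (p₁ * b) ⊗ₜ[ℂ] p₂ - p₁ ⊗ₜ[ℂ] (b * p₂)}

/-- The inverse of the canonical map, `a ⊗ uⁿ ↦ [a h⁻ⁿ ⊗ hⁿ]`. -/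
noncomputable def psiAux (n : ℤ) : SolidTorus p θ →ₗ[ℂ]
    (SolidTorus p θ ⊗[ℂ] SolidTorus p θ) ⧸ relSub ρ :=
  (relSub ρ).mkQ ∘ₗ ((TensorProduct.mk ℂ (SolidTorus p θ) (SolidTorus p θ)).flip
    (stHpow p θ n)) ∘ₗ (LinearMap.mulRight ℂ (stHpow p θ (-n)))

noncomputable def psi : (SolidTorus p θ ⊗[ℂ] LaurentPolynomial ℂ) →ₗ[ℂ]
    ((SolidTorus p θ ⊗[ℂ] SolidTorus p θ) ⧸ relSub ρ) :=
  TensorProduct.lift (LinearMap.flip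
    (((Finsupp.lsum ℂ fun n : ℤ => LinearMap.toSpanSingleton ℂ _ (psiAux ρ n)) ∘ₗ
      (AddMonoidAlgebra.coeffLinearEquiv ℂ).toLinearMap :
      LaurentPolynomial ℂ →ₗ[ℂ] (SolidTorus p θ →ₗ[ℂ]
        ((SolidTorus p θ ⊗[ℂ] SolidTorus p θ) ⧸ relSub ρ)))))

lemma psi_tmul (a : SolidTorus p θ) (n : ℤ) :
    psi ρ (a ⊗ₜ[ℂ] T n) =
      (relSub ρ).mkQ ((a * stHpow p θ (-n)) ⊗ₜ[ℂ] stHpow p θ n) := by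
  have hT : (AddMonoidAlgebra.coeffLinearEquiv ℂ (T n : LaurentPolynomial ℂ) : ℤ →₀ ℂ) =
      Finsupp.single n 1 := rfl
  rw [psi, TensorProduct.lift.tmul, LinearMap.flip_apply, LinearMap.comp_apply,
    LinearEquiv.coe_toLinearMap, hT]
  erw [Finsupp.lsum_single]
  rw [LinearMap.toSpanSingleton_apply_one]
  rfl


lemma relSub_le_ker : relSub ρ ≤ LinearMap.ker (canMap ρ) := by
  rw [relSub, Submodule.span_le]
  rintro t ⟨p₁, p₂, b, hb, rfl⟩
  have key : ∀ z : SolidTorus p θ ⊗[ℂ] LaurentPolynomial ℂ,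
      LinearMap.rTensor (LaurentPolynomial ℂ) (LinearMap.mulLeft ℂ (p₁ * b)) z =
      LinearMap.rTensor (LaurentPolynomial ℂ) (LinearMap.mulLeft ℂ p₁) ((b ⊗ₜ[ℂ] 1) * z) := by
    intro z
    induction z using TensorProduct.induction_on with
    | zero => rw [map_zero, mul_zero, map_zero]
    | tmul a c =>
      rw [Algebra.TensorProduct.tmul_mul_tmul, one_mul, LinearMap.rTensor_tmul,
        LinearMap.rTensor_tmul, LinearMap.mulLeft_apply, LinearMap.mulLeft_apply, mul_assoc]
    | add u v hu hv => rw [map_add, mul_add, map_add, hu, hv]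
  simp only [SetLike.mem_coe, LinearMap.mem_ker, map_sub, canMap_tmul]
  rw [map_mul ρ, hb, key (ρ p₂), sub_self]

include hh hhs hx hxs in
lemma psi_canMap (t : SolidTorus p θ ⊗[ℂ] SolidTorus p θ) :
    psi ρ (canMap ρ t) = (relSub ρ).mkQ t := by
  induction t using TensorProduct.induction_on with
  | zero => rw [map_zero, map_zero, map_zero]
  | add u v hu hv => rw [map_add, map_add, map_add, hu, hv]
  | tmul q1 q2 =>
    obtain ⟨s, f, hco, hz, hρdec, hsum⟩ := rho_decomp ρ hh hhs hx hxs q2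
    rw [canMap_tmul, ← hρdec, map_sum, map_sum]
    have step : ∀ n ∈ s,
        psi ρ (LinearMap.rTensor (LaurentPolynomial ℂ) (LinearMap.mulLeft ℂ q1)
          (f n ⊗ₜ[ℂ] T n)) = (relSub ρ).mkQ (q1 ⊗ₜ[ℂ] f n) := by
      intro n _
      rw [LinearMap.rTensor_tmul, LinearMap.mulLeft_apply, psi_tmul]
      have hb : ρ (f n * stHpow p θ (-n)) = (f n * stHpow p θ (-n)) ⊗ₜ[ℂ] 1 := by
        rw [map_mul, hco n, rho_stHpow ρ hh hhs, Algebra.TensorProduct.tmul_mul_tmul,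
          ← T_add, add_neg_cancel, T_zero]
      have heq : (relSub ρ).mkQ ((q1 * f n * stHpow p θ (-n)) ⊗ₜ[ℂ] stHpow p θ n) =
          (relSub ρ).mkQ (q1 ⊗ₜ[ℂ] (f n * stHpow p θ (-n) * stHpow p θ n)) := by
        rw [Submodule.mkQ_apply, Submodule.mkQ_apply]
        refine (Submodule.Quotient.eq _).mpr ?_
        refine Submodule.subset_span
          ⟨q1, stHpow p θ n, f n * stHpow p θ (-n), hb, ?_⟩
        rw [mul_assoc]
      rw [heq, mul_assoc, stHpow_neg_mul, mul_one]
    rw [Finset.sum_congr rfl step, ← map_sum, ← TensorProduct.tmul_sum, hsum]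

include hh hhs in
lemma canMap_psi (z : SolidTorus p θ ⊗[ℂ] LaurentPolynomial ℂ) :
    Submodule.liftQ (relSub ρ) (canMap ρ) (relSub_le_ker ρ) (psi ρ z) = z := by
  induction z using TensorProduct.induction_on with
  | zero => rw [map_zero, map_zero]
  | add u v hu hv => rw [map_add, map_add, hu, hv]
  | tmul a c =>
    induction c using LaurentPolynomial.induction_on' with
    | add u v hu hv => rw [TensorProduct.tmul_add, map_add, map_add, hu, hv]
    | C_mul_T n r =>
      have hCs : (C r * T n : LaurentPolynomial ℂ) = r • T n := by
        rw [C_eq_algebraMap, ← Algebra.smul_def]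
      rw [hCs, TensorProduct.tmul_smul, map_smul, map_smul, psi_tmul, Submodule.mkQ_apply,
        Submodule.liftQ_apply, canMap_tmul, rho_stHpow ρ hh hhs, LinearMap.rTensor_tmul,
        LinearMap.mulLeft_apply, mul_assoc, stHpow_neg_mul, mul_one]

end Rho
end SolidTorusAux

open SolidTorusAux LaurentPolynomial in
theorem solidTorus_cleft' (p θ : ℝ)
    (ρ : SolidTorus p θ →ₐ[ℂ] SolidTorus p θ ⊗[ℂ] LaurentPolynomial ℂ)
    (hx : ρ (stX p θ) = stX p θ ⊗ₜ[ℂ] 1)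
    (hxs : ρ (stXs p θ) = stXs p θ ⊗ₜ[ℂ] 1)
    (hh : ρ (stH p θ) = stH p θ ⊗ₜ[ℂ] LaurentPolynomial.T 1)
    (hhs : ρ (stHs p θ) = stHs p θ ⊗ₜ[ℂ] LaurentPolynomial.T (-1)) :
    Function.Bijective (Submodule.liftQ (relSub ρ) (canMap ρ) (relSub_le_ker ρ)) := by
  constructor
  · intro a b hab
    obtain ⟨ta, rfl⟩ := (relSub ρ).mkQ_surjective a
    obtain ⟨tb, rfl⟩ := (relSub ρ).mkQ_surjective b
    have ha : Submodule.liftQ (relSub ρ) (canMap ρ) (relSub_le_ker ρ) ((relSub ρ).mkQ ta) =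
        canMap ρ ta := by rw [Submodule.mkQ_apply, Submodule.liftQ_apply]
    have hb : Submodule.liftQ (relSub ρ) (canMap ρ) (relSub_le_ker ρ) ((relSub ρ).mkQ tb) =
        canMap ρ tb := by rw [Submodule.mkQ_apply, Submodule.liftQ_apply]
    rw [← psi_canMap ρ hh hhs hx hxs ta, ← psi_canMap ρ hh hhs hx hxs tb, ← ha, ← hb, hab]
  · intro z
    exact ⟨psi ρ z, canMap_psi ρ hh hhs z⟩
/-- For the quantum solid torus `P = O(D_p ×_θ S¹)` with `H = ℂ[u,u⁻¹]`-coaction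
`ρ(x) = x⊗1`, `ρ(h) = h⊗u`, the map `γ : uⁿ ↦ hⁿ` is a cleaving map: it is
right `H`-colinear, convolution invertible with inverse `uⁿ ↦ h⁻ⁿ`, and the
canonical map `can : P ⊗_B P → P ⊗ H` (on `P ⊗_B P` realized as the quotient of
`P ⊗ P` by the `B`-balancing relations, `B = P^{co H}`) is bijective. -/
theorem solidTorus_cleft (p θ : ℝ) (hp0 : 0 < p) (hp1 : p < 1)
    (ρ : SolidTorus p θ →ₐ[ℂ] SolidTorus p θ ⊗[ℂ] LaurentPolynomial ℂ)
    (hx : ρ (stX p θ) = stX p θ ⊗ₜ[ℂ] 1)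
    (hxs : ρ (stXs p θ) = stXs p θ ⊗ₜ[ℂ] 1)
    (hh : ρ (stH p θ) = stH p θ ⊗ₜ[ℂ] LaurentPolynomial.T 1)
    (hhs : ρ (stHs p θ) = stHs p θ ⊗ₜ[ℂ] LaurentPolynomial.T (-1))
    (γ γ' : LaurentPolynomial ℂ →ₗ[ℂ] SolidTorus p θ)
    (hγ : ∀ n : ℤ, γ (LaurentPolynomial.T n) = stHpow p θ n)
    (hγ' : ∀ n : ℤ, γ' (LaurentPolynomial.T n) = stHpow p θ (-n)) :
    -- `γ` is right `H`-colinear (on the grouplike basis `uⁿ`)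
    (∀ n : ℤ, ρ (γ (LaurentPolynomial.T n)) =
      γ (LaurentPolynomial.T n) ⊗ₜ[ℂ] LaurentPolynomial.T n) ∧
    -- `γ'` is the convolution inverse of `γ`
    (∀ n : ℤ, γ (LaurentPolynomial.T n) * γ' (LaurentPolynomial.T n) = 1 ∧
      γ' (LaurentPolynomial.T n) * γ (LaurentPolynomial.T n) = 1) ∧
    -- the canonical map is well defined on `P ⊗_B P` and bijective
    (∃ hker : Submodule.span ℂ
        {t : SolidTorus p θ ⊗[ℂ] SolidTorus p θ |
          ∃ p₁ p₂ b : SolidTorus p θ, ρ b = b ⊗ₜ[ℂ] 1 ∧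
            t = (p₁ * b) ⊗ₜ[ℂ] p₂ - p₁ ⊗ₜ[ℂ] (b * p₂)} ≤
        LinearMap.ker
          ((LinearMap.rTensor (LaurentPolynomial ℂ)
              (LinearMap.mul' ℂ (SolidTorus p θ))).comp
            (((TensorProduct.assoc ℂ (SolidTorus p θ) (SolidTorus p θ)
                (LaurentPolynomial ℂ)).symm.toLinearMap).comp
              (LinearMap.lTensor (SolidTorus p θ) ρ.toLinearMap))),
      Function.Bijective (Submodule.liftQ _
        ((LinearMap.rTensor (LaurentPolynomial ℂ)
            (LinearMap.mul' ℂ (SolidTorus p θ))).comp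
          (((TensorProduct.assoc ℂ (SolidTorus p θ) (SolidTorus p θ)
              (LaurentPolynomial ℂ)).symm.toLinearMap).comp
            (LinearMap.lTensor (SolidTorus p θ) ρ.toLinearMap))) hker)) := by

  refine ⟨fun n => ?_, fun n => ?_, ?_⟩
  · rw [hγ n]
    exact SolidTorusAux.rho_stHpow ρ hh hhs n
  · rw [hγ n, hγ' n]
    exact ⟨SolidTorusAux.stHpow_mul_neg n, SolidTorusAux.stHpow_neg_mul n⟩
  · exact ⟨SolidTorusAux.relSub_le_ker ρ, solidTorus_cleft' p θ ρ hx hxs hh hhs⟩
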